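/- Let (F, ≺) be an IS-family with minimum element sm(F) and define ex(S) = |S| − |sm(F)|, E_x = {S ∈ F : ex(S) ≤ x}, hat_x(S) = {v ∈ hat(S) : no S' ∈ E_x with S ≺ S' and v ∈ S \ S'}, and M(x) = Σ_{S ∈ E_x} 2^{x − ex(S)} · |hat_x(S)|. Then for every x ≥ 0, M(x+1) ≤ 2·M(x). -/

import Mathlib

/-- A family of subsets of a finite set `V` with a strict partial order. -/
structure ISFamily (V : Type*) [DecidableEq V] [Fintype V] where
  F : Finset (Finset V)
  prec : Finset V → Finset V → Prop
  prec_trans : ∀ {a b c : Finset V}, prec a b → prec b c → prec a c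
  prec_irrefl : ∀ a : Finset V, ¬ prec a a

namespace ISFamily

variable {V : Type*} [DecidableEq V] [Fintype V] (Fam : ISFamily V)

/-- The immediate predecessors of `S` in the family. -/
def Pred (S : Finset V) : Set (Finset V) :=
  {S' | S' ∈ Fam.F ∧ Fam.prec S' S ∧
    ¬ ∃ S'' ∈ Fam.F, Fam.prec S' S'' ∧ Fam.prec S'' S}

/-- `S'` covers `v` if some member of the family preceding `S'` contains `v` while
`S'` does not. -/
def Covers (S' : Finset V) (v : V) : Prop :=
  ∃ S'' ∈ Fam.F, Fam.prec S'' S' ∧ v ∈ S'' ∧ v ∉ S'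

/-- The visible set of `S`: vertices belonging to some immediate predecessor of `S`
and not covered by any immediate predecessor of `S`. -/
def Vis (S : Finset V) : Set V :=
  {v | (∃ S' ∈ Fam.Pred S, v ∈ S') ∧ ∀ S' ∈ Fam.Pred S, ¬ Fam.Covers S' v}

/-- `hat S = S \ ⋃_{S' ≺ S} S'`. -/
def hat (S : Finset V) : Set V :=
  ↑S \ ⋃ S' ∈ {S' | S' ∈ Fam.F ∧ Fam.prec S' S}, (↑S' : Set V)

/-- `W` is a witness of `v` w.r.t. `S`: a minimal element of the family with
`S ≺ W` and `v ∉ W`. -/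
def IsWitness (S : Finset V) (v : V) (W : Finset V) : Prop :=
  W ∈ Fam.F ∧ Fam.prec S W ∧ v ∉ W ∧
    ∀ W' ∈ Fam.F, Fam.prec S W' → v ∉ W' → ¬ Fam.prec W' W

/-- The axioms making `(F, ≺)` an IS-family with smallest element `sm`. -/
structure IsIS (sm : Finset V) : Prop where
  sm_mem : sm ∈ Fam.F
  SE : ∀ S ∈ Fam.F, S ≠ sm → Fam.prec sm S
  SM : ∀ S₁ ∈ Fam.F, ∀ S₂ ∈ Fam.F, Fam.prec S₁ S₂ → S₁.card < S₂.card
  SW : ∀ S ∈ Fam.F, ∀ v ∈ S, ∀ W₁ W₂ : Finset V,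
    Fam.IsWitness S v W₁ → Fam.IsWitness S v W₂ → W₁ = W₂
  TE : ∀ S₁ ∈ Fam.F, ∀ S₂ ∈ Fam.F, ∀ S₃ ∈ Fam.F,
    Fam.prec S₁ S₂ → Fam.prec S₂ S₃ → ∀ v ∈ S₁, v ∉ S₂ → v ∉ S₃
  LVS : ∀ S ∈ Fam.F, ∀ S' ∈ Fam.Pred S, S'.card ≤ (Fam.Vis S).ncard
  DVS : ∀ S ∈ Fam.F, S ≠ sm → ¬ (Fam.Vis S ⊆ ↑S)

/-- The excess of `S` relative to the smallest element `sm`. -/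
def ex (sm S : Finset V) : ℕ := S.card - sm.card

/-- The members of the family of excess at most `x`. -/
def Ex (sm : Finset V) (x : ℕ) : Finset (Finset V) :=
  Fam.F.filter (fun S => ex sm S ≤ x)

/-- The `x`-hat of `S`: elements of `hat S` not excluded by any member of `E_x`
succeeding `S`. -/
def hatx (sm : Finset V) (x : ℕ) (S : Finset V) : Set V :=
  {v ∈ Fam.hat S | ¬ ∃ S' ∈ Fam.Ex sm x, Fam.prec S S' ∧ v ∉ S'}

/-- `M(x) = Σ_{S ∈ E_x} 2^{x - ex(S)} · |hat_x(S)|`. -/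
noncomputable def M (sm : Finset V) (x : ℕ) : ℕ :=
  ∑ S ∈ Fam.Ex sm x, 2 ^ (x - ex sm S) * (Fam.hatx sm x S).ncard

end ISFamily

namespace ISFamily

variable {V : Type*} [DecidableEq V] [Fintype V] (Fam : ISFamily V)

lemma card_ge {sm : Finset V} (hIS : Fam.IsIS sm) {S : Finset V} (hS : S ∈ Fam.F) :
    sm.card ≤ S.card := by
  by_cases h : S = sm
  · simp [h]
  · exact le_of_lt (hIS.SM sm hIS.sm_mem S hS (hIS.SE S hS h))

/-- A maximum-cardinality strict predecessor; it is an immediate predecessor. -/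
lemma exists_max_pred {sm : Finset V} (hIS : Fam.IsIS sm) {S : Finset V} (hS : S ∈ Fam.F)
    (hne : S ≠ sm) :
    ∃ P, P ∈ Fam.Pred S ∧ ∀ T ∈ Fam.F, Fam.prec T S → T.card ≤ P.card := by
  classical
  have hsm : sm ∈ Fam.F.filter (fun T => Fam.prec T S) := by
    simp [Finset.mem_filter, hIS.sm_mem, hIS.SE S hS hne]
  obtain ⟨P, hP, hmax⟩ := Finset.exists_max_image _ Finset.card ⟨sm, hsm⟩
  rw [Finset.mem_filter] at hP
  refine ⟨P, ⟨hP.1, hP.2, ?_⟩, fun T hT hTS => hmax T (Finset.mem_filter.2 ⟨hT, hTS⟩)⟩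
  rintro ⟨T, hT, hPT, hTS⟩
  have h1 := hmax T (Finset.mem_filter.2 ⟨hT, hTS⟩)
  have h2 := hIS.SM P hP.1 T hT hPT
  omega

/-- Every strict predecessor lies below some immediate predecessor. -/
lemma exists_pred_above {sm : Finset V} (hIS : Fam.IsIS sm) {S : Finset V} (hS : S ∈ Fam.F)
    {R : Finset V} (hR : R ∈ Fam.F) (hRS : Fam.prec R S) :
    ∃ P, P ∈ Fam.Pred S ∧ (R = P ∨ Fam.prec R P) := by
  classical
  set D := Fam.F.filter (fun T => (R = T ∨ Fam.prec R T) ∧ Fam.prec T S) with hD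
  have hRD : R ∈ D := by simp [hD, Finset.mem_filter, hR, hRS]
  obtain ⟨P, hP, hmax⟩ := Finset.exists_max_image _ Finset.card ⟨R, hRD⟩
  rw [hD, Finset.mem_filter] at hP
  refine ⟨P, ⟨hP.1, hP.2.2, ?_⟩, hP.2.1⟩
  rintro ⟨T, hT, hPT, hTS⟩
  have hRT : R = T ∨ Fam.prec R T := by
    rcases hP.2.1 with h | h
    · exact Or.inr (h ▸ hPT)
    · exact Or.inr (Fam.prec_trans h hPT)
  have h1 := hmax T (by simp [hD, Finset.mem_filter, hT, hRT, hTS])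
  have h2 := hIS.SM P hP.1 T hT hPT
  omega

/-- Existence of a minimal witness, of minimal cardinality among all candidates. -/
lemma exists_witness {sm : Finset V} (hIS : Fam.IsIS sm) {T : Finset V} {v : V}
    {S' : Finset V} (hS' : S' ∈ Fam.F) (hTS' : Fam.prec T S') (hvS' : v ∉ S') :
    ∃ W, Fam.IsWitness T v W ∧ W.card ≤ S'.card := by
  classical
  set D := Fam.F.filter (fun W => Fam.prec T W ∧ v ∉ W) with hD
  have hS'D : S' ∈ D := by simp [hD, Finset.mem_filter, hS', hTS', hvS']
  obtain ⟨W, hW, hmin⟩ := Finset.exists_min_image _ Finset.card ⟨S', hS'D⟩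
  rw [hD, Finset.mem_filter] at hW
  refine ⟨W, ⟨hW.1, hW.2.1, hW.2.2, ?_⟩, hmin S' hS'D⟩
  intro W' hW' hTW' hvW' hWW'
  have h1 := hmin W' (by simp [hD, Finset.mem_filter, hW', hTW', hvW'])
  have h2 := hIS.SM W' hW' W hW.1 hWW'
  omega

end ISFamily

namespace ISFamily

variable {V : Type*} [DecidableEq V] [Fintype V] (Fam : ISFamily V)

lemma key_vertex {sm : Finset V} (hIS : Fam.IsIS sm) {x : ℕ} {S : Finset V}
    (hS : S ∈ Fam.F) (hcard : S.card = sm.card + x + 1) {v : V}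
    (hv : v ∈ Fam.Vis S) (hvS : v ∉ S) :
    ∃ T, T ∈ Fam.Ex sm x ∧ Fam.prec T S ∧ v ∈ T ∧
      v ∈ Fam.hatx sm x T ∧ v ∉ Fam.hatx sm (x+1) T ∧ Fam.IsWitness T v S := by
  classical
  obtain ⟨⟨P₀, hP₀, hvP₀⟩, hnc⟩ := hv
  set D := Fam.F.filter (fun T => Fam.prec T S ∧ v ∈ T) with hD
  have hP₀D : P₀ ∈ D := by simp [hD, Finset.mem_filter, hP₀.1, hP₀.2.1, hvP₀]
  obtain ⟨T, hT, hmin⟩ := Finset.exists_min_image _ Finset.card ⟨P₀, hP₀D⟩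
  rw [hD, Finset.mem_filter] at hT
  obtain ⟨hTF, hTS, hvT⟩ := hT
  -- v ∈ hat T
  have hhat : v ∈ Fam.hat T := by
    refine ⟨hvT, ?_⟩
    intro hcon
    obtain ⟨T'', hT''mem, hvT''⟩ := Set.mem_iUnion₂.1 hcon
    obtain ⟨hT''F, hT''T⟩ := hT''mem
    have h1 := hmin T'' (by
      simp only [hD, Finset.mem_filter]
      exact ⟨hT''F, Fam.prec_trans hT''T hTS, hvT''⟩)
    have h2 := hIS.SM T'' hT''F T hTF hT''T
    omega
  -- S is a witness of (T, v)
  have hwit : Fam.IsWitness T v S := by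
    refine ⟨hS, hTS, hvS, ?_⟩
    intro W' hW' hTW' hvW' hW'S
    obtain ⟨P, hP, hcases⟩ := Fam.exists_pred_above hIS hS hW' hW'S
    have hvnP : v ∉ P := by
      rcases hcases with rfl | h
      · exact hvW'
      · exact hIS.TE T hTF W' hW' P hP.1 hTW' h v hvT hvW'
    have hTP : Fam.prec T P := by
      rcases hcases with rfl | h
      · exact hTW'
      · exact Fam.prec_trans hTW' h
    exact hnc P hP ⟨T, hTF, hTP, hvT, hvnP⟩
  -- v ∈ hatx sm x T
  have hTcard : T.card < S.card := hIS.SM T hTF S hS hTS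
  have hbT : sm.card ≤ T.card := Fam.card_ge hIS hTF
  have hmem : v ∈ Fam.hatx sm x T := by
    refine ⟨hhat, ?_⟩
    rintro ⟨S', hS'Ex, hTS', hvS'⟩
    rw [Ex, Finset.mem_filter] at hS'Ex
    obtain ⟨W, hWwit, hWcard⟩ := Fam.exists_witness hIS hS'Ex.1 hTS' hvS'
    have hWS : W = S := hIS.SW T hTF v hvT W S hWwit hwit
    have hbS' : sm.card ≤ S'.card := Fam.card_ge hIS hS'Ex.1
    rw [hWS] at hWcard
    have hex : S'.card - sm.card ≤ x := hS'Ex.2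
    omega
  refine ⟨T, ?_, hTS, hvT, hmem, ?_, hwit⟩
  · rw [Ex, Finset.mem_filter]
    exact ⟨hTF, by simp only [ex]; omega⟩
  · intro hmem'
    exact hmem'.2 ⟨S, by rw [Ex, Finset.mem_filter]; exact ⟨hS, by simp only [ex]; omega⟩, hTS, hvS⟩

end ISFamily

namespace ISFamily

variable {V : Type*} [DecidableEq V] [Fintype V] (Fam : ISFamily V)

lemma key_S {sm : Finset V} (hIS : Fam.IsIS sm) {x : ℕ} {S : Finset V}
    (hS : S ∈ Fam.F) (hcard : S.card = sm.card + x + 1) (f : V → Finset V)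
    (hf : ∀ v ∈ (Set.toFinite (Fam.Vis S \ ↑S)).toFinset, f v ∈ Fam.F ∧ Fam.prec (f v) S) :
    (Fam.hatx sm (x+1) S).ncard ≤
      ∑ v ∈ (Set.toFinite (Fam.Vis S \ ↑S)).toFinset, 2 ^ (x + 1 - ex sm (f v)) := by
  classical
  set A := (Set.toFinite (Fam.Vis S \ ↑S)).toFinset with hA
  have hne : S ≠ sm := by intro h; rw [h] at hcard; omega
  obtain ⟨P, hP, hmaxP⟩ := Fam.exists_max_pred hIS hS hne
  have hPF : P ∈ Fam.F := hP.1
  have hPS : Fam.prec P S := hP.2.1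
  have hPcard : P.card < S.card := hIS.SM P hPF S hS hPS
  set d := S.card - P.card with hd
  -- lower bound on each summand
  have hterm : ∀ v ∈ A, 2^d ≤ 2^(x+1-ex sm (f v)) := by
    intro v hv
    obtain ⟨hfF, hfS⟩ := hf v hv
    have h1 : (f v).card ≤ P.card := hmaxP _ hfF hfS
    have h2 : sm.card ≤ (f v).card := Fam.card_ge hIS hfF
    apply Nat.pow_le_pow_right (by norm_num)
    simp only [ex]; omega
  have hsum : A.card * 2^d ≤ ∑ v ∈ A, 2^(x+1-ex sm (f v)) := by
    simpa using Finset.card_nsmul_le_sum A _ (2^d) hterm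
  -- at least one visible vertex outside S
  have hk : 1 ≤ A.card := by
    obtain ⟨v, hv⟩ := Set.not_subset.1 (hIS.DVS S hS hne)
    exact Finset.card_pos.2 ⟨v, by rw [hA, Set.Finite.mem_toFinset]; exact ⟨hv.1, hv.2⟩⟩
  -- splitting the visible set
  have hVsplit : (Fam.Vis S ∩ ↑S).ncard + A.card = (Fam.Vis S).ncard := by
    rw [hA, ← Set.ncard_eq_toFinset_card (Fam.Vis S \ ↑S) (Set.toFinite _)]
    exact Set.ncard_inter_add_ncard_diff_eq_ncard (Fam.Vis S) ↑S (Set.toFinite _)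
  have hLVS : P.card ≤ (Fam.Vis S).ncard := hIS.LVS S hS P hP
  -- hatx and Vis ∩ S are disjoint subsets of S
  have hdisj : Disjoint (Fam.hatx sm (x+1) S) (Fam.Vis S ∩ ↑S) := by
    rw [Set.disjoint_left]
    rintro v hv1 ⟨⟨⟨P', hP', hvP'⟩, -⟩, -⟩
    exact hv1.1.2 (Set.mem_iUnion₂.2 ⟨P', ⟨hP'.1, hP'.2.1⟩, hvP'⟩)
  have hsubS : Fam.hatx sm (x+1) S ∪ (Fam.Vis S ∩ ↑S) ⊆ ↑S := by
    rintro v (hv | hv)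
    · exact hv.1.1
    · exact hv.2
  have hhx : (Fam.hatx sm (x+1) S).ncard + (Fam.Vis S ∩ ↑S).ncard ≤ S.card := by
    calc (Fam.hatx sm (x+1) S).ncard + (Fam.Vis S ∩ ↑S).ncard
        = (Fam.hatx sm (x+1) S ∪ (Fam.Vis S ∩ ↑S)).ncard :=
          (Set.ncard_union_eq hdisj (Set.toFinite _) (Set.toFinite _)).symm
      _ ≤ (↑S : Set V).ncard := Set.ncard_le_ncard hsubS (Set.toFinite _)
      _ = S.card := Set.ncard_coe_finset S
  -- numeric finish
  have h2d : d + 1 ≤ 2 ^ d := Nat.lt_two_pow_self (n := d)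
  have e1 : (Fam.hatx sm (x+1) S).ncard ≤ d + A.card := by omega
  have e2 : A.card * (d+1) ≤ A.card * 2^d := Nat.mul_le_mul_left _ h2d
  have e3 : d ≤ A.card * d := Nat.le_mul_of_pos_left d hk
  have e4 : A.card * (d+1) = A.card * d + A.card := by ring
  omega

end ISFamily

open ISFamily in
/-- `M(x+1) ≤ 2·M(x)` for every `x ≥ 0`. -/
theorem second_level_bound {V : Type*} [DecidableEq V] [Fintype V]
    (Fam : ISFamily V) (sm : Finset V) (hIS : Fam.IsIS sm) (x : ℕ) :
    Fam.M sm (x + 1) ≤ 2 * Fam.M sm x := by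
  classical
  set New := Fam.F.filter (fun S => ex sm S = x + 1) with hNew
  have hExsplit : Fam.Ex sm (x+1) = Fam.Ex sm x ∪ New := by
    ext S
    simp only [Ex, hNew, Finset.mem_filter, Finset.mem_union]
    constructor
    · rintro ⟨hF, h⟩
      rcases Nat.lt_or_ge (ex sm S) (x+1) with h' | h'
      · exact Or.inl ⟨hF, by omega⟩
      · exact Or.inr ⟨hF, by omega⟩
    · rintro (⟨hF, h⟩ | ⟨hF, h⟩) <;> exact ⟨hF, by omega⟩
  have hdisj : Disjoint (Fam.Ex sm x) New := by
    rw [Finset.disjoint_left]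
    intro S h1 h2
    rw [Ex, Finset.mem_filter] at h1
    rw [hNew, Finset.mem_filter] at h2
    omega
  -- split M(x+1)
  have hM1 : Fam.M sm (x+1) =
      (∑ S ∈ Fam.Ex sm x, 2^(x+1-ex sm S) * (Fam.hatx sm (x+1) S).ncard) +
        ∑ S ∈ New, (Fam.hatx sm (x+1) S).ncard := by
    rw [M, hExsplit, Finset.sum_union hdisj]
    congr 1
    refine Finset.sum_congr rfl fun S hSN => ?_
    have h : ex sm S = x+1 := (Finset.mem_filter.1 hSN).2
    rw [h]
    simp
  -- 2·M(x)
  have hM2 : 2 * Fam.M sm x =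
      ∑ S ∈ Fam.Ex sm x, 2^(x+1-ex sm S) * (Fam.hatx sm x S).ncard := by
    rw [M, Finset.mul_sum]
    refine Finset.sum_congr rfl fun S hSE => ?_
    have hle : ex sm S ≤ x := (Finset.mem_filter.1 hSE).2
    rw [← mul_assoc, ← pow_succ']
    congr 2
    omega
  -- monotonicity of hatx
  have hsub : ∀ S, Fam.hatx sm (x+1) S ⊆ Fam.hatx sm x S := by
    intro S v hv
    refine ⟨hv.1, fun hcon => hv.2 ?_⟩
    obtain ⟨S', hS', hprec, hvn⟩ := hcon
    rw [Ex, Finset.mem_filter] at hS'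
    exact ⟨S', by rw [Ex, Finset.mem_filter]; exact ⟨hS'.1, by omega⟩, hprec, hvn⟩
  have hLcard : ∀ S, (Fam.hatx sm x S).ncard =
      (Fam.hatx sm (x+1) S).ncard + (Fam.hatx sm x S \ Fam.hatx sm (x+1) S).ncard := by
    intro S
    rw [add_comm, Set.ncard_diff_add_ncard_of_subset (hsub S) (Set.toFinite _)]
  -- the key inequality : new contribution is dominated by the losses
  have key : (∑ S ∈ New, (Fam.hatx sm (x+1) S).ncard) ≤
      ∑ T ∈ Fam.Ex sm x, 2^(x+1-ex sm T) *
        (Fam.hatx sm x T \ Fam.hatx sm (x+1) T).ncard := by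
    have hcardNew : ∀ S ∈ New, S ∈ Fam.F ∧ S.card = sm.card + x + 1 := by
      intro S hSN
      rw [hNew, Finset.mem_filter] at hSN
      have hb := Fam.card_ge hIS hSN.1
      have : ex sm S = x + 1 := hSN.2
      rw [ex] at this
      exact ⟨hSN.1, by omega⟩
    have hkv : ∀ S v, ∃ T : Finset V, S ∈ New → v ∈ Fam.Vis S \ ↑S →
        T ∈ Fam.Ex sm x ∧ Fam.prec T S ∧ v ∈ T ∧
        v ∈ Fam.hatx sm x T ∧ v ∉ Fam.hatx sm (x+1) T ∧ Fam.IsWitness T v S := by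
      intro S v
      by_cases h : S ∈ New ∧ v ∈ Fam.Vis S \ ↑S
      · obtain ⟨hSF, hcard⟩ := hcardNew S h.1
        obtain ⟨T, hT⟩ := Fam.key_vertex hIS hSF hcard h.2.1 h.2.2
        exact ⟨T, fun _ _ => hT⟩
      · exact ⟨∅, fun h1 h2 => absurd ⟨h1, h2⟩ h⟩
    choose f hf using hkv
    set A : Finset V → Finset V := fun S => (Set.toFinite (Fam.Vis S \ ↑S)).toFinset with hAdef
    set L : Finset V → Finset V :=
      fun T => (Set.toFinite (Fam.hatx sm x T \ Fam.hatx sm (x+1) T)).toFinset with hLdef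
    have hperS : ∀ S ∈ New, (Fam.hatx sm (x+1) S).ncard ≤
        ∑ v ∈ A S, 2^(x+1 - ex sm (f S v)) := by
      intro S hSN
      obtain ⟨hSF, hcard⟩ := hcardNew S hSN
      refine Fam.key_S hIS hSF hcard (f S) fun v hv => ?_
      rw [Set.Finite.mem_toFinset] at hv
      obtain ⟨hT1, hT2, -⟩ := hf S v hSN hv
      rw [Ex, Finset.mem_filter] at hT1
      exact ⟨hT1.1, hT2⟩
    calc (∑ S ∈ New, (Fam.hatx sm (x+1) S).ncard)
        ≤ ∑ S ∈ New, ∑ v ∈ A S, 2^(x+1 - ex sm (f S v)) := Finset.sum_le_sum hperS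
      _ = ∑ p ∈ New.sigma A, 2^(x+1 - ex sm (f p.1 p.2)) := Finset.sum_sigma' New A _
      _ = ∑ q ∈ (New.sigma A).image (fun p => (⟨f p.1 p.2, p.2⟩ : (_ : Finset V) × V)),
            2^(x+1 - ex sm q.1) := by
          rw [Finset.sum_image]
          rintro ⟨S₁, v₁⟩ hp₁ ⟨S₂, v₂⟩ hp₂ heq
          rw [Finset.mem_coe, Finset.mem_sigma] at hp₁ hp₂
          have hv₁ : v₁ ∈ Fam.Vis S₁ \ ↑S₁ := (Set.Finite.mem_toFinset _).1 hp₁.2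
          have hv₂ : v₂ ∈ Fam.Vis S₂ \ ↑S₂ := (Set.Finite.mem_toFinset _).1 hp₂.2
          obtain ⟨hT1, -, hvT, -, -, hw₁⟩ := hf S₁ v₁ hp₁.1 hv₁
          obtain ⟨hT1', -, -, -, -, hw₂⟩ := hf S₂ v₂ hp₂.1 hv₂
          have hveq : v₁ = v₂ := congrArg Sigma.snd heq
          subst hveq
          have hfeq : f S₁ v₁ = f S₂ v₁ := congrArg Sigma.fst heq
          rw [← hfeq] at hw₂
          rw [Ex, Finset.mem_filter] at hT1
          have : S₁ = S₂ := hIS.SW (f S₁ v₁) hT1.1 v₁ hvT S₁ S₂ hw₁ hw₂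
          simp [this]
      _ ≤ ∑ q ∈ (Fam.Ex sm x).sigma L, 2^(x+1 - ex sm q.1) := by
          refine Finset.sum_le_sum_of_subset ?_
          intro q hq
          rw [Finset.mem_image] at hq
          obtain ⟨⟨S, v⟩, hp, rfl⟩ := hq
          rw [Finset.mem_sigma] at hp
          have hv : v ∈ Fam.Vis S \ ↑S := (Set.Finite.mem_toFinset _).1 hp.2
          obtain ⟨hT1, -, -, hin, hout, -⟩ := hf S v hp.1 hv
          rw [Finset.mem_sigma]
          exact ⟨hT1, (Set.Finite.mem_toFinset _).2 ⟨hin, hout⟩⟩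
      _ = ∑ T ∈ Fam.Ex sm x, ∑ _v ∈ L T, 2^(x+1 - ex sm T) := by
          rw [Finset.sum_sigma]
      _ = ∑ T ∈ Fam.Ex sm x, 2^(x+1-ex sm T) *
            (Fam.hatx sm x T \ Fam.hatx sm (x+1) T).ncard := by
          refine Finset.sum_congr rfl fun T _ => ?_
          rw [Finset.sum_const, Set.ncard_eq_toFinset_card _ (Set.toFinite _)]
          rw [smul_eq_mul, mul_comm]
  -- assemble
  rw [hM1, hM2]
  have hsplit : ∑ S ∈ Fam.Ex sm x, 2^(x+1-ex sm S) * (Fam.hatx sm x S).ncard =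
      (∑ S ∈ Fam.Ex sm x, 2^(x+1-ex sm S) * (Fam.hatx sm (x+1) S).ncard) +
        ∑ S ∈ Fam.Ex sm x, 2^(x+1-ex sm S) *
          (Fam.hatx sm x S \ Fam.hatx sm (x+1) S).ncard := by
    rw [← Finset.sum_add_distrib]
    refine Finset.sum_congr rfl fun S _ => ?_
    rw [hLcard S, mul_add]
  rw [hsplit]
  exact add_le_add_right key _
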